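/- arXiv:2102.00733 — 4 statements merged into one kernel-verified Lean document; each statement's English description precedes it below -/
import Mathlib

section
/- The space of splines of smoothness order k over knots ξ₀ < ξ₁ < ... < ξ_{n+1} (piecewise polynomials of degree at most k with continuous derivatives up to order k−1 at the internal knots) with zero boundary conditions (all derivatives of order 0 through k−1 vanish at ξ₀ and ξ_{n+1}) has dimension n − k + 1, provided n ≥ k. -/
open Polynomial

def IsSplineAux (k n : ℕ) (ξ : ℕ → ℝ) (p : ℕ → Polynomial ℝ) (S : ℝ → ℝ) : Prop :=
  (∀ i ≤ n, (p i).natDegree ≤ k) ∧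
  S (ξ 0) = (p 0).eval (ξ 0) ∧
  (∀ i ≤ n, ∀ t ∈ Set.Ioc (ξ i) (ξ (i + 1)), S t = (p i).eval t) ∧
  (∀ i < n, ∀ j < k,
    (derivative^[j] (p i)).eval (ξ (i + 1)) = (derivative^[j] (p (i + 1))).eval (ξ (i + 1)))

def ZeroBC (k n : ℕ) (ξ : ℕ → ℝ) (p : ℕ → Polynomial ℝ) : Prop :=
  ∀ j < k, (derivative^[j] (p 0)).eval (ξ 0) = 0 ∧
    (derivative^[j] (p n)).eval (ξ (n + 1)) = 0

def SplineU (k n : ℕ) (ξ : ℕ → ℝ) : Set (ℝ → ℝ) :=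
  {S | (∀ t, t ∉ Set.Icc (ξ 0) (ξ (n + 1)) → S t = 0) ∧
    ∃ p : ℕ → Polynomial ℝ, IsSplineAux k n ξ p S}

def SplineZB (k n : ℕ) (ξ : ℕ → ℝ) : Set (ℝ → ℝ) :=
  {S | (∀ t, t ∉ Set.Icc (ξ 0) (ξ (n + 1)) → S t = 0) ∧
    ∃ p : ℕ → Polynomial ℝ, IsSplineAux k n ξ p S ∧ ZeroBC k n ξ p}

namespace SplineDim

/-- Truncated power basis function. -/
noncomputable def T (k n : ℕ) (ξ : ℕ → ℝ) (i : ℕ) : ℝ → ℝ := fun t =>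
  if (ξ i < t ∨ (i = 0 ∧ t = ξ 0)) ∧ t ≤ ξ (n + 1) then (t - ξ i) ^ k else 0

/-- Partial-sum piece polynomials. -/
noncomputable def P (k : ℕ) (ξ : ℕ → ℝ) (c : ℕ → ℝ) (i : ℕ) : Polynomial ℝ :=
  ∑ m ∈ Finset.range (i + 1), C (c m) * (X - C (ξ m)) ^ k

/-- The candidate spline attached to coefficients `c`. -/
noncomputable def Ssum (k n : ℕ) (ξ : ℕ → ℝ) (c : ℕ → ℝ) : ℝ → ℝ :=
  fun t => ∑ m ∈ Finset.range (n + 1), c m * T k n ξ m t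

section basic

variable {k n : ℕ} {ξ : ℕ → ℝ}

lemma xi_le (hξ : ∀ i ≤ n, ξ i < ξ (i + 1)) :
    ∀ j ≤ n + 1, ∀ i ≤ j, ξ i ≤ ξ j := by
  intro j
  induction j with
  | zero => intro _ i hi; interval_cases i; rfl
  | succ m ih =>
    intro hm i hi
    rcases Nat.lt_or_ge i (m + 1) with h | h
    · exact le_trans (ih (by omega) i (by omega)) (le_of_lt (hξ m (by omega)))
    · have : i = m + 1 := by omega
      simp [this]

lemma xi_lt (hξ : ∀ i ≤ n, ξ i < ξ (i + 1)) :
    ∀ j ≤ n + 1, ∀ i < j, ξ i < ξ j := by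
  intro j hj i hi
  have h1 : ξ i ≤ ξ (j - 1) := xi_le hξ (j-1) (by omega) i (by omega)
  have h2 : ξ (j - 1) < ξ j := by
    have := hξ (j-1) (by omega)
    have hjj : j - 1 + 1 = j := by omega
    rwa [hjj] at this
  linarith

lemma natDegree_P_le (c : ℕ → ℝ) (i : ℕ) : (P k ξ c i).natDegree ≤ k := by
  apply Polynomial.natDegree_sum_le_of_forall_le
  intro m _
  calc (C (c m) * (X - C (ξ m)) ^ k).natDegree
      ≤ (C (c m)).natDegree + ((X - C (ξ m)) ^ k).natDegree := natDegree_mul_le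
    _ ≤ 0 + k := by
        gcongr
        · exact le_of_eq (natDegree_C _)
        · calc ((X - C (ξ m)) ^ k).natDegree ≤ k * (X - C (ξ m)).natDegree :=
                natDegree_pow_le
            _ ≤ k * 1 := by gcongr; exact le_of_eq (natDegree_X_sub_C _)
            _ = k := mul_one k
    _ = k := zero_add k

lemma iterate_deriv_P (c : ℕ → ℝ) (i j : ℕ) :
    derivative^[j] (P k ξ c i)
      = ∑ m ∈ Finset.range (i + 1),
          k.descFactorial j • (C (c m) * (X - C (ξ m)) ^ (k - j)) := by
  rw [P, iterate_derivative_sum]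
  refine Finset.sum_congr rfl fun m _ => ?_
  rw [iterate_derivative_C_mul, iterate_derivative_X_sub_pow, mul_smul_comm]

lemma eval_iterate_deriv_P (c : ℕ → ℝ) (i j : ℕ) (t : ℝ) :
    (derivative^[j] (P k ξ c i)).eval t
      = (k.descFactorial j : ℝ) * ∑ m ∈ Finset.range (i + 1), c m * (t - ξ m) ^ (k - j) := by
  rw [iterate_deriv_P, eval_finset_sum, Finset.mul_sum]
  refine Finset.sum_congr rfl fun m _ => ?_
  simp [mul_comm, mul_assoc, mul_left_comm]

lemma eval_P (c : ℕ → ℝ) (i : ℕ) (t : ℝ) :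
    (P k ξ c i).eval t = ∑ m ∈ Finset.range (i + 1), c m * (t - ξ m) ^ k := by
  have := eval_iterate_deriv_P (k := k) (ξ := ξ) c i 0 t
  simpa using this

lemma Ssum_outside (hξ : ∀ i ≤ n, ξ i < ξ (i + 1)) (c : ℕ → ℝ) (t : ℝ)
    (ht : t ∉ Set.Icc (ξ 0) (ξ (n + 1))) : Ssum k n ξ c t = 0 := by
  rw [Set.mem_Icc, not_and_or] at ht
  refine Finset.sum_eq_zero fun m hm => ?_
  have hm' : m < n + 1 := Finset.mem_range.mp hm
  rw [T, if_neg, mul_zero]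
  rcases ht with h | h
  · push_neg at h
    rintro ⟨h1 | ⟨rfl, rfl⟩, -⟩
    · have : ξ 0 ≤ ξ m := xi_le hξ m (by omega) 0 (by omega)
      linarith
    · exact absurd rfl (ne_of_gt h)
  · push_neg at h
    rintro ⟨-, h2⟩
    linarith

lemma Ssum_zeroknot (hξ : ∀ i ≤ n, ξ i < ξ (i + 1)) (c : ℕ → ℝ) :
    Ssum k n ξ c (ξ 0) = (P k ξ c 0).eval (ξ 0) := by
  rw [eval_P, Finset.sum_range_one, Ssum]
  rw [Finset.sum_eq_single_of_mem 0 (Finset.mem_range.mpr (by omega))]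
  · congr 1
    rw [T, if_pos]
    exact ⟨Or.inr ⟨rfl, rfl⟩, xi_le hξ (n+1) le_rfl 0 (by omega)⟩
  · intro m hm hm0
    have hm' : m < n + 1 := Finset.mem_range.mp hm
    rw [T, if_neg, mul_zero]
    rintro ⟨h1 | ⟨rfl, -⟩, -⟩
    · have : ξ 0 < ξ m := xi_lt hξ m (by omega) 0 (by omega)
      linarith
    · exact hm0 rfl

lemma Ssum_Ioc (hξ : ∀ i ≤ n, ξ i < ξ (i + 1)) (c : ℕ → ℝ) {i : ℕ} (hi : i ≤ n)
    {t : ℝ} (ht : t ∈ Set.Ioc (ξ i) (ξ (i + 1))) :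
    Ssum k n ξ c t = (P k ξ c i).eval t := by
  obtain ⟨ht1, ht2⟩ := ht
  rw [eval_P, Ssum]
  rw [← Finset.sum_subset (Finset.range_subset_range.mpr (by omega : i + 1 ≤ n + 1))]
  · refine Finset.sum_congr rfl fun m hm => ?_
    have hm' : m < i + 1 := Finset.mem_range.mp hm
    congr 1
    rw [T, if_pos]
    constructor
    · left
      have : ξ m ≤ ξ i := xi_le hξ i (by omega) m (by omega)
      linarith
    · have : ξ (i + 1) ≤ ξ (n + 1) := xi_le hξ (n+1) le_rfl (i+1) (by omega)
      linarith
  · intro m hm hm'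
    have h1 : m < n + 1 := Finset.mem_range.mp hm
    have h2 : i + 1 ≤ m := by
      by_contra h
      exact hm' (Finset.mem_range.mpr (by omega))
    rw [T, if_neg, mul_zero]
    rintro ⟨hcase | ⟨rfl, rfl⟩, -⟩
    · have : ξ (i + 1) ≤ ξ m := xi_le hξ m (by omega) (i+1) h2
      linarith
    · have : ξ 0 ≤ ξ i := xi_le hξ i (by omega) 0 (by omega)
      linarith

lemma exists_piece (hξ : ∀ i ≤ n, ξ i < ξ (i + 1)) {t : ℝ}
    (h1 : ξ 0 < t) (h2 : t ≤ ξ (n + 1)) :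
    ∃ i ≤ n, t ∈ Set.Ioc (ξ i) (ξ (i + 1)) := by
  classical
  have hex : ∃ i, t ≤ ξ (i + 1) := ⟨n, h2⟩
  set i := Nat.find hex with hidef
  have hi1 : t ≤ ξ (i + 1) := Nat.find_spec hex
  have hin : i ≤ n := Nat.find_min' hex h2
  refine ⟨i, hin, ?_, hi1⟩
  rcases Nat.eq_zero_or_pos i with h0 | h0
  · rw [h0]; exact h1
  · have hmin := Nat.find_min hex (show i - 1 < i by omega)
    push_neg at hmin
    have : i - 1 + 1 = i := by omega
    rwa [this] at hmin

end basic

end SplineDim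

namespace SplineDim

section structural

variable {k n : ℕ} {ξ : ℕ → ℝ}

lemma flat_poly {k : ℕ} {p : Polynomial ℝ} {a : ℝ} (hdeg : p.natDegree ≤ k)
    (h : ∀ j < k, (derivative^[j] p).eval a = 0) :
    p = C ((taylor a p).coeff k) * (X - C a) ^ k := by
  have hco : ∀ j < k, (taylor a p).coeff j = 0 := by
    intro j hj
    rw [taylor_coeff]
    have hfac := congrFun (factorial_smul_hasseDeriv (R := ℝ) j) p
    have h0 : (j.factorial • hasseDeriv j p).eval a = 0 := by
      rw [show (j.factorial • hasseDeriv j : Polynomial ℝ →ₗ[ℝ] Polynomial ℝ) p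
            = j.factorial • (hasseDeriv j p) from rfl] at hfac
      rw [hfac]; exact h j hj
    rw [nsmul_eq_mul, eval_mul] at h0
    have hne : ((j.factorial : Polynomial ℝ).eval a) ≠ 0 := by
      simp only [eval_natCast]
      exact_mod_cast j.factorial_ne_zero
    exact (mul_eq_zero.mp h0).resolve_left hne
  conv_lhs => rw [← sum_taylor_eq p a]
  rw [Polynomial.sum_over_range' (taylor a p) (by simp) (k + 1)
      (by rw [natDegree_taylor]; omega)]
  rw [Finset.sum_eq_single_of_mem k (Finset.self_mem_range_succ k)]
  intro i hmem hik
  have hik' : i < k := by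
    have := Finset.mem_range.mp hmem; omega
  rw [hco i hik', map_zero, zero_mul]

lemma coeff_flat (a r : ℝ) (k : ℕ) : (C a * (X - C r) ^ k).coeff k = a := by
  rw [coeff_C_mul]
  have h1 : ((X - C r) ^ k).natDegree = k := by
    rw [natDegree_pow, natDegree_X_sub_C, mul_one]
  have h2 := ((monic_X_sub_C r).pow k).coeff_natDegree
  rw [h1] at h2
  rw [h2, mul_one]

/-- Forward: every spline with zero BC comes from coefficients satisfying the
right-boundary vanishing conditions. -/
lemma exists_coeffs (hξ : ∀ i ≤ n, ξ i < ξ (i + 1)) {S : ℝ → ℝ}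
    (hS : S ∈ SplineZB k n ξ) :
    ∃ c : ℕ → ℝ,
      (∀ j < k, ∑ m ∈ Finset.range (n + 1), c m * (ξ (n + 1) - ξ m) ^ (k - j) = 0) ∧
      S = Ssum k n ξ c := by
  obtain ⟨hout, p, ⟨hdeg, h0, hIoc, hsm⟩, hbc⟩ := hS
  set c : ℕ → ℝ := fun m =>
    if m = 0 then (p 0).coeff k else (p m).coeff k - (p (m - 1)).coeff k with hc
  have hp : ∀ i ≤ n, p i = P k ξ c i := by
    intro i
    induction i with
    | zero =>
      intro _
      have hfp := flat_poly (hdeg 0 (by omega)) (fun j hj => (hbc j hj).1)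
      have hcoe : (p 0).coeff k = (taylor (ξ 0) (p 0)).coeff k := by
        conv_lhs => rw [hfp]
        rw [coeff_flat]
      rw [P, Finset.sum_range_one]
      rw [show c 0 = (p 0).coeff k from if_pos rfl, hcoe]
      exact hfp
    | succ i ih =>
      intro hin
      have hi : i ≤ n := by omega
      have hq : ∀ j < k, (derivative^[j] (p (i + 1) - p i)).eval (ξ (i + 1)) = 0 := by
        intro j hj
        rw [iterate_derivative_sub, eval_sub, (hsm i (by omega) j hj), sub_self]
      have hqdeg : (p (i + 1) - p i).natDegree ≤ k :=
        le_trans (natDegree_sub_le _ _) (max_le (hdeg _ hin) (hdeg _ hi))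
      have hfp := flat_poly hqdeg hq
      have hcoe : (p (i + 1) - p i).coeff k
          = (taylor (ξ (i + 1)) (p (i + 1) - p i)).coeff k := by
        conv_lhs => rw [hfp]
        rw [coeff_flat]
      have hc1 : c (i + 1) = (p (i + 1) - p i).coeff k := by
        rw [hc]
        simp only [Nat.succ_ne_zero, if_false, Nat.add_sub_cancel, coeff_sub]
      have : p (i + 1) = p i + C (c (i + 1)) * (X - C (ξ (i + 1))) ^ k := by
        rw [hc1, hcoe, ← hfp]; ring
      rw [this, ih hi]
      simp [P, Finset.sum_range_succ]
  refine ⟨c, ?_, ?_⟩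
  · intro j hj
    have hz := (hbc j hj).2
    rw [hp n le_rfl, eval_iterate_deriv_P] at hz
    have hdne : ((k.descFactorial j : ℝ)) ≠ 0 := by
      have hnn : k.descFactorial j ≠ 0 := by
        intro hzero
        have := Nat.descFactorial_eq_zero_iff_lt.mp hzero
        omega
      exact_mod_cast hnn
    exact (mul_eq_zero.mp hz).resolve_left hdne
  · funext t
    by_cases htin : t ∈ Set.Icc (ξ 0) (ξ (n + 1))
    · rcases eq_or_lt_of_le htin.1 with heq | hlt
      · rw [← heq, h0, Ssum_zeroknot hξ, hp 0 (by omega)]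
      · obtain ⟨i, hi, hti⟩ := exists_piece hξ hlt htin.2
        rw [hIoc i hi t hti, Ssum_Ioc hξ c hi hti, hp i hi]
    · rw [hout t htin, Ssum_outside hξ c t htin]

/-- Backward: coefficients satisfying the right-boundary conditions give a
spline with zero BC. -/
lemma Ssum_mem (hξ : ∀ i ≤ n, ξ i < ξ (i + 1)) {c : ℕ → ℝ}
    (hc : ∀ j < k, ∑ m ∈ Finset.range (n + 1), c m * (ξ (n + 1) - ξ m) ^ (k - j) = 0) :
    Ssum k n ξ c ∈ SplineZB k n ξ := by
  refine ⟨fun t ht => Ssum_outside hξ c t ht, fun i => P k ξ c i,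
    ⟨fun i _ => natDegree_P_le c i, Ssum_zeroknot hξ c,
      fun i hi t ht => Ssum_Ioc hξ c hi ht, ?_⟩, ?_⟩
  · intro i hin j hj
    rw [eval_iterate_deriv_P, eval_iterate_deriv_P]
    congr 1
    have hterm : c (i + 1) * (ξ (i + 1) - ξ (i + 1)) ^ (k - j) = 0 := by
      rw [sub_self, zero_pow (by omega : k - j ≠ 0), mul_zero]
    conv_rhs => rw [Finset.sum_range_succ]
    rw [hterm, add_zero]
  · intro j hj
    constructor
    · rw [eval_iterate_deriv_P]
      simp [sub_self, zero_pow (show k - j ≠ 0 by omega)]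
    · rw [eval_iterate_deriv_P, hc j hj, mul_zero]

end structural

end SplineDim

namespace SplineDim

section linearpart

variable (k n : ℕ) (ξ : ℕ → ℝ)

noncomputable def Phi : (Fin (n + 1) → ℝ) →ₗ[ℝ] (ℝ → ℝ) where
  toFun c := fun t => ∑ i : Fin (n + 1), c i * T k n ξ i t
  map_add' c d := by
    funext t
    simp [add_mul, Finset.sum_add_distrib]
  map_smul' r c := by
    funext t
    simp [Finset.mul_sum, mul_assoc]

noncomputable def Gm : (Fin (n + 1) → ℝ) →ₗ[ℝ] (Fin k → ℝ) where
  toFun c := fun j => ∑ i : Fin (n + 1), c i * (ξ (n + 1) - ξ (i : ℕ)) ^ (k - (j : ℕ))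
  map_add' c d := by funext j; simp [add_mul, Finset.sum_add_distrib]
  map_smul' r c := by funext j; simp [Finset.mul_sum, mul_assoc]

variable {k n ξ}

/-- Extend a finitely-indexed coefficient vector by zero. -/
def ext (c : Fin (n + 1) → ℝ) : ℕ → ℝ := fun m => if h : m < n + 1 then c ⟨m, h⟩ else 0

lemma Phi_eq_Ssum (c : Fin (n + 1) → ℝ) : Phi k n ξ c = Ssum k n ξ (ext c) := by
  funext t
  show ∑ i : Fin (n + 1), c i * T k n ξ i t = _
  rw [Ssum, ← Fin.sum_univ_eq_sum_range (fun m => ext c m * T k n ξ m t) (n + 1)]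
  refine Finset.sum_congr rfl fun i _ => ?_
  congr 1
  simp [ext, show ¬ n < (i : ℕ) by omega]

lemma Ssum_congr {c d : ℕ → ℝ} (h : ∀ m < n + 1, c m = d m) :
    Ssum k n ξ c = Ssum k n ξ d :=
  funext fun t => Finset.sum_congr rfl fun m hm => by
    rw [h m (Finset.mem_range.mp hm)]

lemma SplineZB_eq (hξ : ∀ i ≤ n, ξ i < ξ (i + 1)) :
    SplineZB k n ξ = ↑((LinearMap.ker (Gm k n ξ)).map (Phi k n ξ)) := by
  ext S
  constructor
  · intro hS
    obtain ⟨c, hcond, rfl⟩ := exists_coeffs hξ hS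
    refine ⟨fun i => c (i : ℕ), ?_, ?_⟩
    · simp only [SetLike.mem_coe, LinearMap.mem_ker]
      funext j
      show ∑ i : Fin (n + 1), c (i : ℕ) * (ξ (n + 1) - ξ (i : ℕ)) ^ (k - (j : ℕ)) = 0
      rw [Fin.sum_univ_eq_sum_range (fun m => c m * (ξ (n + 1) - ξ m) ^ (k - (j : ℕ))) (n + 1)]
      exact hcond j j.isLt
    · rw [Phi_eq_Ssum]
      exact (Ssum_congr (fun m hm => by simp [ext, hm])).symm
  · rintro ⟨c, hker, rfl⟩
    rw [Phi_eq_Ssum]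
    apply Ssum_mem hξ
    intro j hj
    have h0 := congrFun (LinearMap.mem_ker.mp hker) ⟨j, hj⟩
    have h0' : ∑ i : Fin (n + 1), c i * (ξ (n + 1) - ξ (i : ℕ)) ^ (k - j) = 0 := h0
    rw [← Fin.sum_univ_eq_sum_range (fun m => ext c m * (ξ (n + 1) - ξ m) ^ (k - j)) (n + 1)]
    rw [← h0']
    refine Finset.sum_congr rfl fun i _ => ?_
    congr 1
    simp [ext, show ¬ n < (i : ℕ) by omega]

lemma Phi_inj (hξ : ∀ i ≤ n, ξ i < ξ (i + 1)) : Function.Injective (Phi k n ξ) := by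
  rw [← LinearMap.ker_eq_bot, Submodule.eq_bot_iff]
  intro c hc
  rw [LinearMap.mem_ker] at hc
  have key : ∀ m : ℕ, ∀ h : m < n + 1, c ⟨m, h⟩ = 0 := by
    intro m
    induction m using Nat.strong_induction_on with
    | _ m ih =>
      intro hm
      have h0 : ∑ i : Fin (n + 1), c i * T k n ξ (i : ℕ) (ξ (m + 1)) = 0 := by
        have := congrFun hc (ξ (m + 1))
        simpa [Phi] using this
      rw [Finset.sum_eq_single_of_mem (⟨m, hm⟩ : Fin (n + 1)) (Finset.mem_univ _)] at h0
      · have hT : T k n ξ m (ξ (m + 1)) = (ξ (m + 1) - ξ m) ^ k := by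
          rw [T, if_pos]
          exact ⟨Or.inl (hξ m (by omega)), xi_le hξ (n + 1) le_rfl (m + 1) (by omega)⟩
        rw [hT] at h0
        have hpos : (0 : ℝ) < (ξ (m + 1) - ξ m) ^ k := by
          have h' : ξ m < ξ (m + 1) := hξ m (by omega)
          have h'' : (0 : ℝ) < ξ (m + 1) - ξ m := by linarith
          exact pow_pos h'' k
        have := mul_eq_zero.mp h0
        rcases this with h | h
        · exact h
        · exact absurd h (ne_of_gt hpos)
      · intro i _ hne
        have hin : (i : ℕ) < n + 1 := i.isLt
        rcases Nat.lt_or_ge (i : ℕ) m with hlt | hge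
        · have : c i = 0 := by
            have := ih (i : ℕ) hlt hin
            simpa using this
          rw [this, zero_mul]
        · have hgt : m < (i : ℕ) := by
            rcases Nat.eq_or_lt_of_le hge with h | h
            · exfalso; apply hne; apply Fin.ext; show (i : ℕ) = m; omega
            · omega
          have hT0 : T k n ξ (i : ℕ) (ξ (m + 1)) = 0 := by
            rw [T, if_neg]
            rintro ⟨hcase | ⟨hi0, heq⟩, -⟩
            · have : ξ (m + 1) ≤ ξ (i : ℕ) := xi_le hξ (i : ℕ) (by omega) (m + 1) hgt
              linarith
            · omega
          rw [hT0, mul_zero]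
  funext i
  have := key (i : ℕ) i.isLt
  simpa using this

lemma Gm_surj (hkn : k ≤ n) (hξ : ∀ i ≤ n, ξ i < ξ (i + 1)) :
    Function.Surjective (Gm k n ξ) := by
  classical
  intro y
  set x : Fin k → ℝ := fun i => ξ (n + 1) - ξ (i : ℕ) with hx
  have hxpos : ∀ i : Fin k, 0 < x i := fun i =>
    sub_pos.mpr (xi_lt hξ (n + 1) le_rfl (i : ℕ) (by omega))
  have hinj : Function.Injective x := by
    intro i j hij
    have hxi : ξ (i : ℕ) = ξ (j : ℕ) := by
      have : ξ (n + 1) - ξ (i : ℕ) = ξ (n + 1) - ξ (j : ℕ) := hij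
      linarith
    by_contra hne
    have hne' : (i : ℕ) ≠ (j : ℕ) := fun h => hne (Fin.ext h)
    rcases Nat.lt_or_ge (i : ℕ) (j : ℕ) with h | h
    · exact absurd hxi (ne_of_lt (xi_lt hξ (j : ℕ) (by omega) (i : ℕ) h))
    · have h' : (j : ℕ) < (i : ℕ) := by omega
      exact absurd hxi.symm (ne_of_lt (xi_lt hξ (i : ℕ) (by omega) (j : ℕ) h'))
  set V : Matrix (Fin k) (Fin k) ℝ :=
    Matrix.of fun j i => x i * (Matrix.vandermonde x).transpose j i with hV
  set M : Matrix (Fin k) (Fin k) ℝ := Matrix.of fun j i => x i ^ (k - (j : ℕ)) with hM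
  have hMV : M = V.submatrix Fin.revPerm id := by
    ext j i
    show x i ^ (k - (j : ℕ)) = x i * x i ^ ((Fin.rev j : ℕ))
    rw [← pow_succ']
    congr 1
    have := j.isLt
    simp [Fin.rev]
    omega
  have hdetV : V.det = (∏ i, x i) * (Matrix.vandermonde x).det := by
    rw [hV, Matrix.det_mul_row, Matrix.det_transpose]
  have hdet : M.det ≠ 0 := by
    rw [hMV, Matrix.det_permute]
    have h1 : ((Equiv.Perm.sign (Fin.revPerm : Equiv.Perm (Fin k)) : ℤ) : ℝ) ≠ 0 := by
      have := Units.ne_zero (Equiv.Perm.sign (Fin.revPerm : Equiv.Perm (Fin k)))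
      exact_mod_cast this
    have h2 : (∏ i, x i) ≠ 0 :=
      Finset.prod_ne_zero_iff.mpr fun i _ => (hxpos i).ne'
    have h3 : (Matrix.vandermonde x).det ≠ 0 :=
      Matrix.det_vandermonde_ne_zero_iff.mpr hinj
    rw [hdetV]
    exact mul_ne_zero h1 (mul_ne_zero h2 h3)
  obtain ⟨d, hd⟩ : ∃ d : Fin k → ℝ, M.mulVec d = y := by
    refine ⟨M⁻¹.mulVec y, ?_⟩
    rw [Matrix.mulVec_mulVec, Matrix.mul_nonsing_inv M (isUnit_iff_ne_zero.mpr hdet),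
      Matrix.one_mulVec]
  set dd : ℕ → ℝ := fun m => if h : m < k then d ⟨m, h⟩ else 0 with hdd
  refine ⟨fun i => dd (i : ℕ), ?_⟩
  funext j
  show ∑ i : Fin (n + 1), dd (i : ℕ) * (ξ (n + 1) - ξ (i : ℕ)) ^ (k - (j : ℕ)) = y j
  rw [Fin.sum_univ_eq_sum_range (fun m => dd m * (ξ (n + 1) - ξ m) ^ (k - (j : ℕ))) (n + 1)]
  rw [← Finset.sum_subset (Finset.range_subset_range.mpr (by omega : k ≤ n + 1))]
  · rw [← Fin.sum_univ_eq_sum_range (fun m => dd m * (ξ (n + 1) - ξ m) ^ (k - (j : ℕ))) k]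
    rw [← hd]
    rw [Matrix.mulVec]
    refine Finset.sum_congr rfl fun i _ => ?_
    show dd (i : ℕ) * (ξ (n + 1) - ξ (i : ℕ)) ^ (k - (j : ℕ)) = M j i * d i
    rw [hdd]
    simp only [i.isLt, dif_pos]
    rw [hM]
    show d i * (ξ (n + 1) - ξ (i : ℕ)) ^ (k - (j : ℕ)) = x i ^ (k - (j : ℕ)) * d i
    rw [hx, mul_comm]
  · intro m hm hm'
    have : ¬ m < k := fun h => hm' (Finset.mem_range.mpr h)
    rw [hdd]
    simp [this]

end linearpart

end SplineDim

/-- The space of order-`k` splines with zero boundary conditions over knots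
`ξ 0 < ... < ξ (n+1)` has dimension `n - k + 1`, provided `n ≥ k`. -/
theorem spline_zero_boundary_dimension (k n : ℕ) (hkn : k ≤ n) (ξ : ℕ → ℝ)
    (hξ : ∀ i ≤ n, ξ i < ξ (i + 1)) :
    Module.finrank ℝ ↥(Submodule.span ℝ (SplineZB k n ξ)) = n - k + 1 := by
  classical
  rw [SplineDim.SplineZB_eq hξ, Submodule.span_eq]
  have hinj := SplineDim.Phi_inj (k := k) hξ
  have e := Submodule.equivMapOfInjective (SplineDim.Phi k n ξ) hinj
    (LinearMap.ker (SplineDim.Gm k n ξ))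
  rw [← e.finrank_eq]
  have hsurj := SplineDim.Gm_surj hkn hξ
  have hrn := LinearMap.finrank_range_add_finrank_ker (SplineDim.Gm k n ξ)
  rw [LinearMap.range_eq_top.mpr hsurj, finrank_top] at hrn
  have h1 : Module.finrank ℝ (Fin (n + 1) → ℝ) = n + 1 := by simp
  have h2 : Module.finrank ℝ (Fin k → ℝ) = k := by simp
  omega
end

section
/- If n = k − 1 (i.e., there are k+1 knots), the only spline of smoothness order k over these knots satisfying the zero boundary conditions of order 0 through k−1 at both endpoints is the zero function. -/
open Polynomial

lemma spline_aux_pow (k : ℕ) (q : Polynomial ℝ) (a : ℝ) (hdeg : q.natDegree ≤ k)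
    (h : ∀ j < k, (derivative^[j] q).eval a = 0) :
    ∃ c : ℝ, q = C c * (X - C a) ^ k := by
  rcases Nat.eq_zero_or_pos k with rfl | hk
  · exact ⟨q.coeff 0, by simpa using (eq_C_of_natDegree_eq_zero (Nat.le_zero.mp hdeg))⟩
  rcases eq_or_ne q 0 with rfl | hq
  · exact ⟨0, by simp⟩
  have hlt : k - 1 < q.rootMultiplicity a := by
    refine (lt_rootMultiplicity_iff_isRoot_iterate_derivative hq).2 ?_
    intro m hm
    exact h m (lt_of_le_of_lt hm (Nat.sub_lt hk one_pos))
  have hdvd : (X - C a) ^ k ∣ q :=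
    (pow_dvd_pow _ (by omega : k ≤ q.rootMultiplicity a)).trans (q.pow_rootMultiplicity_dvd a)
  obtain ⟨r, hr⟩ := hdvd
  have hXk : ((X - C a : Polynomial ℝ) ^ k) ≠ 0 := pow_ne_zero _ (X_sub_C_ne_zero a)
  have hr0 : r ≠ 0 := by rintro rfl; simp at hr; exact hq hr
  have hnd : q.natDegree = k + r.natDegree := by
    rw [hr, natDegree_mul hXk hr0, natDegree_pow, natDegree_X_sub_C, mul_one]
  have : r.natDegree = 0 := by omega
  refine ⟨r.coeff 0, ?_⟩
  rw [hr, mul_comm]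
  congr 1
  exact eq_C_of_natDegree_eq_zero this

lemma spline_find_interval (ξ : ℕ → ℝ) :
    ∀ m, ∀ t, ξ 0 < t → t ≤ ξ (m + 1) → ∃ i ≤ m, t ∈ Set.Ioc (ξ i) (ξ (i + 1)) := by
  intro m
  induction m with
  | zero => exact fun t h1 h2 => ⟨0, le_rfl, h1, h2⟩
  | succ m ih =>
    intro t h1 h2
    by_cases h : ξ (m + 1) < t
    · exact ⟨m + 1, le_rfl, h, h2⟩
    · push_neg at h
      obtain ⟨i, hi, hti⟩ := ih t h1 h
      exact ⟨i, by omega, hti⟩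

theorem spline_trivial_of_minimal_knots' (k : ℕ) (hk : 1 ≤ k) (ξ : ℕ → ℝ)
    (hξ : ∀ i ≤ k - 1, ξ i < ξ (i + 1)) :
    ∀ S, ((∀ t, t ∉ Set.Icc (ξ 0) (ξ (k - 1 + 1)) → S t = 0) ∧
      ∃ p : ℕ → Polynomial ℝ,
        ((∀ i ≤ k - 1, (p i).natDegree ≤ k) ∧
         S (ξ 0) = (p 0).eval (ξ 0) ∧
         (∀ i ≤ k - 1, ∀ t ∈ Set.Ioc (ξ i) (ξ (i + 1)), S t = (p i).eval t) ∧
         (∀ i < k - 1, ∀ j < k,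
           (derivative^[j] (p i)).eval (ξ (i + 1)) = (derivative^[j] (p (i + 1))).eval (ξ (i + 1)))) ∧
        (∀ j < k, (derivative^[j] (p 0)).eval (ξ 0) = 0 ∧
          (derivative^[j] (p (k - 1))).eval (ξ (k - 1 + 1)) = 0)) →
      S = fun _ => 0 := by
  intro S hS
  obtain ⟨hout, p, ⟨hdeg, hS0, hpieces, hsmooth⟩, hbc⟩ := hS
  have hnk : k - 1 + 1 = k := Nat.sub_add_cancel hk
  have hmono : ∀ j ≤ k, ∀ i, i < j → ξ i < ξ j := by
    intro j hj
    induction j with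
    | zero => intro i hi; omega
    | succ m ih =>
      intro i hi
      have hm : ξ m < ξ (m + 1) := hξ m (by omega)
      rcases Nat.lt_succ_iff_lt_or_eq.mp hi with h' | rfl
      · exact lt_trans (ih (by omega) i h') hm
      · exact hm
  have key : ∀ N, N ≤ k - 1 → ∃ c : ℕ → ℝ,
      ∀ i ≤ N, p i = ∑ m ∈ Finset.range (i + 1), C (c m) * (X - C (ξ m)) ^ k := by
    intro N
    induction N with
    | zero =>
      intro _
      obtain ⟨c0, h0⟩ := spline_aux_pow k (p 0) (ξ 0) (hdeg 0 (Nat.zero_le _))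
        (fun j hj => (hbc j hj).1)
      exact ⟨fun _ => c0, by intro i hi; interval_cases i; simpa using h0⟩
    | succ N ih =>
      intro hN
      obtain ⟨c, hc⟩ := ih (by omega)
      obtain ⟨d, hd⟩ := spline_aux_pow k (p (N + 1) - p N) (ξ (N + 1))
        (le_trans (natDegree_sub_le _ _) (max_le (hdeg _ (by omega)) (hdeg _ (by omega))))
        (by
          intro j hj
          rw [Polynomial.iterate_derivative_sub, eval_sub, hsmooth N (by omega) j hj, sub_self])
      refine ⟨fun m => if m = N + 1 then d else c m, ?_⟩
      intro i hi
      by_cases hiN : i ≤ N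
      · rw [hc i hiN]
        refine Finset.sum_congr rfl ?_
        intro m hm
        rw [Finset.mem_range] at hm
        simp only [if_neg (show ¬ m = N + 1 by omega)]
      · have hieq : i = N + 1 := by omega
        subst hieq
        rw [Finset.sum_range_succ]
        have hP : p (N + 1) = (∑ m ∈ Finset.range (N + 1), C (c m) * (X - C (ξ m)) ^ k)
            + C d * (X - C (ξ (N + 1))) ^ k := by
          rw [← hc N le_rfl, ← hd]; ring
        rw [hP]
        congr 1
        · refine Finset.sum_congr rfl ?_
          intro m hm
          rw [Finset.mem_range] at hm
          simp only [if_neg (show ¬ m = N + 1 by omega)]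
        · simp
  obtain ⟨c, hc⟩ := key (k - 1) le_rfl
  obtain ⟨e, he⟩ := spline_aux_pow k (p (k - 1)) (ξ k) (hdeg _ le_rfl)
    (by intro j hj; have h := (hbc j hj).2; rwa [hnk] at h)
  set c' : ℕ → ℝ := fun m => if m = k then -e else c m with hc'
  have hsum0 : ∑ m ∈ Finset.range (k + 1), C (c' m) * (X - C (ξ m)) ^ k = 0 := by
    rw [Finset.sum_range_succ]
    have h2 := hc (k - 1) le_rfl
    rw [hnk] at h2
    have h1 : ∑ m ∈ Finset.range k, C (c' m) * (X - C (ξ m)) ^ k = C e * (X - C (ξ k)) ^ k := by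
      rw [← he, h2]
      refine Finset.sum_congr rfl ?_
      intro m hm
      rw [Finset.mem_range] at hm
      simp only [hc', if_neg (show ¬ m = k by omega)]
    rw [h1]
    have hck : c' k = -e := by simp [hc']
    rw [hck]
    simp only [map_neg]
    ring
  have hcoeff : ∀ s ≤ k, ∑ m ∈ Finset.range (k + 1), c' m * (-ξ m) ^ s = 0 := by
    intro s hs
    have h0 := congrArg (fun q => Polynomial.coeff q (k - s)) hsum0
    simp only [finset_sum_coeff, coeff_zero] at h0
    have hexp : ∀ m, (C (c' m) * (X - C (ξ m)) ^ k).coeff (k - s)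
        = c' m * (-ξ m) ^ s * (k.choose (k - s) : ℝ) := by
      intro m
      rw [coeff_C_mul]
      have hX : (X - C (ξ m) : Polynomial ℝ) = X + C (-ξ m) := by rw [map_neg, sub_eq_add_neg]
      rw [hX, coeff_X_add_C_pow, Nat.sub_sub_self hs, mul_assoc]
    rw [Finset.sum_congr rfl (fun m _ => hexp m)] at h0
    rw [← Finset.sum_mul] at h0
    have hch : (k.choose (k - s) : ℝ) ≠ 0 :=
      Nat.cast_ne_zero.2 (Nat.choose_pos (by omega : k - s ≤ k)).ne'
    exact (mul_eq_zero.mp h0).resolve_right hch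
  have hinj : Function.Injective (fun j : Fin (k + 1) => -ξ (j : ℕ)) := by
    intro a b hab
    simp only [neg_inj] at hab
    by_contra hne
    have hne' : (a : ℕ) ≠ (b : ℕ) := fun h => hne (Fin.ext h)
    rcases lt_or_gt_of_ne hne' with h | h
    · exact absurd hab (ne_of_lt (hmono b (Nat.lt_succ_iff.mp b.isLt) a h))
    · exact absurd hab.symm (ne_of_lt (hmono a (Nat.lt_succ_iff.mp a.isLt) b h))
  have hv0 : (fun j : Fin (k + 1) => c' (j : ℕ)) = 0 := by
    apply Matrix.eq_zero_of_forall_pow_sum_mul_pow_eq_zero hinj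
    intro i
    rw [Fin.sum_univ_eq_sum_range (fun j => c' j * (-ξ j) ^ (i : ℕ)) (k + 1)]
    exact hcoeff (i : ℕ) (Nat.lt_succ_iff.mp i.isLt)
  have hcz : ∀ m, m ≤ k - 1 → c m = 0 := by
    intro m hm
    have h := congrFun hv0 ⟨m, by omega⟩
    simp only [hc', Pi.zero_apply] at h
    rwa [if_neg (show ¬ m = k by omega)] at h
  have hp0 : ∀ i ≤ k - 1, p i = 0 := by
    intro i hi
    rw [hc i hi]
    apply Finset.sum_eq_zero
    intro m hm
    rw [Finset.mem_range] at hm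
    rw [hcz m (by omega), map_zero, zero_mul]
  funext t
  by_cases ht : t ∈ Set.Icc (ξ 0) (ξ (k - 1 + 1))
  · rcases eq_or_lt_of_le ht.1 with heq | hlt
    · show S t = 0
      rw [← heq, hS0, hp0 0 (Nat.zero_le _)]
      simp
    · obtain ⟨i, hi, hti⟩ := spline_find_interval ξ (k - 1) t hlt ht.2
      rw [hpieces i hi t hti, hp0 i hi]
      simp
  · exact hout t ht

/-- If `n = k - 1` (there are `k+1` knots), the only order-`k` spline with zero
boundary conditions is the zero function. -/
theorem spline_trivial_of_minimal_knots (k : ℕ) (hk : 1 ≤ k) (ξ : ℕ → ℝ)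
    (hξ : ∀ i ≤ k - 1, ξ i < ξ (i + 1)) :
    ∀ S ∈ SplineZB k (k - 1) ξ, S = fun _ => 0 := by
  intro S hS
  obtain ⟨hout, p, hsp, hbc⟩ := hS
  exact spline_trivial_of_minimal_knots' k hk ξ hξ S ⟨hout, p, hsp, hbc⟩
end

section
/- The linear map sending a spline of order k over knots ξ₀ < ... < ξ_{n+1} (with zero boundary conditions) to its matrix of derivative values at the knots is a linear isomorphism onto the space of (n+2)×(k+1) matrices satisfying the Taylor-expansion compatibility conditions s_{i+1,r} = Σ_{j=0}^{k−r} (ξ_{i+1}−ξ_i)^j/j! · s_{i,j+r} (for appropriate one-sided conventions on the k-th column) together with the zero boundary conditions; moreover, equipping the matrix space with the inner product ⟨S, S̃⟩ = Σ_{i=0}^n Σ_{l=0}^{2k} (ξ_{i+1}−ξ_i)^{l+1}/(l+1) Σ_{m=max(l−k,0)}^{min(l,k)} s_{i,l−m} s̃_{i,m}/((l−m)! m!), this map is an isometry with respect to the L² inner product on splines. -/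
open Polynomial

/-- The (one-sided) matrix of derivative values at the knots of a spline with
polynomial pieces `p`: row `i ≤ n` holds the derivatives of `p i` at `ξ i`, the
last row holds the derivatives of `p n` at `ξ (n+1)` with the `k`-th entry set
to `0`; entries outside the index range are `0`. -/
noncomputable def derMat (k n : ℕ) (ξ : ℕ → ℝ) (p : ℕ → Polynomial ℝ) : ℕ → ℕ → ℝ :=
  fun i j =>
    if k < j ∨ n + 1 < i then 0
    else if i ≤ n then (derivative^[j] (p i)).eval (ξ i)
    else if j < k then (derivative^[j] (p n)).eval (ξ (n + 1))
    else 0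

/-- The admissible matrices: Taylor-expansion compatibility between consecutive
rows together with the zero boundary conditions. -/
def AdmMat (k n : ℕ) (ξ : ℕ → ℝ) : Set (ℕ → ℕ → ℝ) :=
  {u | (∀ i j, (k < j ∨ n + 1 < i) → u i j = 0) ∧ u (n + 1) k = 0 ∧
    (∀ i ≤ n, ∀ r < k,
      u (i + 1) r = ∑ j ∈ Finset.range (k - r + 1),
        (ξ (i + 1) - ξ i) ^ j / (Nat.factorial j) * u i (j + r)) ∧
    (∀ j < k, u 0 j = 0 ∧ u (n + 1) j = 0)}

/-- The inner product of two derivative matrices mirroring the `L²` inner product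
of the corresponding splines. -/
noncomputable def matInner (k n : ℕ) (ξ : ℕ → ℝ) (u v : ℕ → ℕ → ℝ) : ℝ :=
  ∑ i ∈ Finset.range (n + 1), ∑ l ∈ Finset.range (2 * k + 1),
    (ξ (i + 1) - ξ i) ^ (l + 1) / (l + 1) *
      ∑ m ∈ Finset.Icc (l - k) (min l k),
        u i (l - m) * v i m / (Nat.factorial (l - m) * Nat.factorial m)


open Finset in
private lemma taylor_eval' {P : Polynomial ℝ} {k : ℕ} (hP : P.natDegree ≤ k) (a x : ℝ) :
    P.eval x = ∑ j ∈ Finset.range (k+1),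
      (x - a)^j / (Nat.factorial j) * (derivative^[j] P).eval a := by
  conv_lhs => rw [← sum_taylor_eq P a]
  rw [Polynomial.eval_sum]
  rw [Polynomial.sum_over_range' (n := k+1) _ (by intro n; simp) (by
    rw [natDegree_taylor]; omega)]
  refine Finset.sum_congr rfl fun j _ => ?_
  rw [taylor_coeff]
  have : (derivative^[j] P) = (Nat.factorial j) • hasseDeriv j P := by
    rw [← factorial_smul_hasseDeriv]; rfl
  rw [this]
  simp [mul_comm, Nat.factorial_ne_zero]
  field_simp

private lemma taylor_der {P : Polynomial ℝ} {k : ℕ} (hP : P.natDegree ≤ k) {r : ℕ} (hr : r ≤ k)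
    (a x : ℝ) :
    (derivative^[r] P).eval x = ∑ j ∈ Finset.range (k - r + 1),
      (x - a)^j / (Nat.factorial j) * (derivative^[j + r] P).eval a := by
  have hdeg : (derivative^[r] P).natDegree ≤ k - r :=
    le_trans (Polynomial.natDegree_iterate_derivative _ _) (by omega)
  rw [taylor_eval' hdeg a x]
  refine Finset.sum_congr rfl fun j _ => ?_
  rw [← Function.iterate_add_apply]

private noncomputable def recP (k : ℕ) (a : ℝ) (u : ℕ → ℝ) : Polynomial ℝ :=
  ∑ j ∈ Finset.range (k+1), Polynomial.C (u j / (Nat.factorial j)) * (Polynomial.X - Polynomial.C a)^j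

private lemma recP_natDegree (k : ℕ) (a : ℝ) (u : ℕ → ℝ) : (recP k a u).natDegree ≤ k := by
  refine (Polynomial.natDegree_sum_le _ _).trans ?_
  simp only [Finset.fold_max_le]
  refine ⟨Nat.zero_le _, fun j hj => ?_⟩
  simp only [Finset.mem_range] at hj
  refine (Polynomial.natDegree_mul_le).trans ?_
  simp only [Polynomial.natDegree_C, zero_add]
  calc ((Polynomial.X - Polynomial.C a)^j).natDegree
      ≤ j * (Polynomial.X - Polynomial.C a).natDegree := Polynomial.natDegree_pow_le
    _ ≤ j * 1 := by gcongr; exact Polynomial.natDegree_X_sub_C_le a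
    _ ≤ k := by omega

private lemma recP_der (k : ℕ) (a : ℝ) (u : ℕ → ℝ) {r : ℕ} (hr : r ≤ k) :
    (derivative^[r] (recP k a u)).eval a = u r := by
  unfold recP
  rw [Polynomial.iterate_derivative_sum]
  rw [Polynomial.eval_finset_sum]
  have key : ∀ j ∈ Finset.range (k+1),
      (derivative^[r] (Polynomial.C (u j / (Nat.factorial j)) *
        (Polynomial.X - Polynomial.C a)^j)).eval a
        = if j = r then u r else 0 := by
    intro j hj
    rw [Polynomial.iterate_derivative_C_mul, Polynomial.iterate_derivative_X_sub_pow]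
    simp only [Polynomial.eval_mul, Polynomial.eval_C, Polynomial.eval_smul, Polynomial.eval_pow,
      Polynomial.eval_sub, Polynomial.eval_X, sub_self, smul_eq_mul]
    rcases lt_trichotomy j r with h | h | h
    · rw [Nat.descFactorial_eq_zero_iff_lt.2 h, if_neg h.ne]
      simp
    · subst h
      simp [Nat.descFactorial_self, zero_pow_eq, div_mul_eq_mul_div,
        mul_comm, Nat.factorial_ne_zero]
      field_simp
    · rw [if_neg (by omega), zero_pow (by omega)]
      ring
  rw [Finset.sum_congr rfl key, Finset.sum_ite_eq' _ r, if_pos (by simp; omega)]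

private lemma poly_eq_recP {P : Polynomial ℝ} {k : ℕ} (hP : P.natDegree ≤ k) (a : ℝ)
    (u : ℕ → ℝ) (hu : ∀ j ≤ k, (derivative^[j] P).eval a = u j) :
    P = recP k a u := by
  apply Polynomial.funext
  intro x
  rw [taylor_eval' hP a x, taylor_eval' (recP_natDegree k a u) a x]
  refine Finset.sum_congr rfl fun j hj => ?_
  simp only [Finset.mem_range] at hj
  rw [hu j (by omega), recP_der k a u (by omega)]

private lemma sum_reindex (k : ℕ) (f : ℕ → ℕ → ℝ) :
    ∑ j ∈ Finset.range (k+1), ∑ m ∈ Finset.range (k+1), f j m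
      = ∑ l ∈ Finset.range (2*k+1), ∑ m ∈ Finset.Icc (l - k) (min l k), f (l - m) m := by
  rw [← Finset.sum_product']
  have hr : ∑ l ∈ Finset.range (2*k+1), ∑ m ∈ Finset.Icc (l - k) (min l k), f (l - m) m
      = ∑ x ∈ (Finset.range (2*k+1)).sigma (fun l => Finset.Icc (l - k) (min l k)),
          f (x.1 - x.2) x.2 := Finset.sum_sigma' _ _ (fun l m => f (l - m) m)
  rw [hr]
  refine Finset.sum_nbij' (fun x => ⟨x.1 + x.2, x.2⟩) (fun x => (x.1 - x.2, x.2)) ?_ ?_ ?_ ?_ ?_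
  · rintro ⟨j, m⟩ h
    simp only [Finset.mem_product, Finset.mem_range] at h
    simp only [Finset.mem_sigma, Finset.mem_range, Finset.mem_Icc, le_min_iff]
    omega
  · rintro ⟨l, m⟩ h
    simp only [Finset.mem_sigma, Finset.mem_range, Finset.mem_Icc, le_min_iff] at h
    simp only [Finset.mem_product, Finset.mem_range]
    omega
  · rintro ⟨j, m⟩ h; simp
  · rintro ⟨l, m⟩ h
    simp only [Finset.mem_sigma, Finset.mem_range, Finset.mem_Icc, le_min_iff] at h
    simp only [Sigma.mk.inj_iff, heq_eq_eq]
    exact ⟨by omega, trivial⟩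
  · rintro ⟨j, m⟩ h; simp

private lemma integral_pow_sub (a b : ℝ) (N : ℕ) :
    ∫ t in a..b, (t - a)^N = (b - a)^(N+1) / (N+1) := by
  have := intervalIntegral.integral_comp_sub_right (a := a) (b := b) (fun s => s ^ N) a
  rw [this, integral_pow]
  simp

private lemma poly_integral {k : ℕ} (a b : ℝ) (P Q : Polynomial ℝ)
    (hP : P.natDegree ≤ k) (hQ : Q.natDegree ≤ k) :
    (∫ t in a..b, P.eval t * Q.eval t)
      = ∑ l ∈ Finset.range (2*k+1), (b-a)^(l+1)/(l+1) *
          ∑ m ∈ Finset.Icc (l - k) (min l k),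
            (derivative^[l-m] P).eval a * (derivative^[m] Q).eval a
              / (Nat.factorial (l-m) * Nat.factorial m) := by
  have h1 : ∀ t : ℝ, P.eval t * Q.eval t = ∑ j ∈ Finset.range (k+1), ∑ m ∈ Finset.range (k+1),
      ((derivative^[j] P).eval a * (derivative^[m] Q).eval a
        / (Nat.factorial j * Nat.factorial m)) * (t-a)^(j+m) := by
    intro t
    rw [taylor_eval' hP a t, taylor_eval' hQ a t, Finset.sum_mul_sum]
    refine Finset.sum_congr rfl fun j _ => Finset.sum_congr rfl fun m _ => ?_
    rw [pow_add]
    ring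
  have h2 : (∫ t in a..b, P.eval t * Q.eval t)
      = ∑ j ∈ Finset.range (k+1), ∑ m ∈ Finset.range (k+1),
        ((derivative^[j] P).eval a * (derivative^[m] Q).eval a
          / (Nat.factorial j * Nat.factorial m)) * ((b-a)^(j+m+1)/(j+m+1)) := by
    simp only [h1]
    rw [intervalIntegral.integral_finset_sum]
    · refine Finset.sum_congr rfl fun j _ => ?_
      rw [intervalIntegral.integral_finset_sum]
      · refine Finset.sum_congr rfl fun m _ => ?_
        rw [intervalIntegral.integral_const_mul, integral_pow_sub]
        push_cast
        ring
      · intro m _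
        exact (Continuous.intervalIntegrable (by continuity) _ _)
    · intro j _
      apply Continuous.intervalIntegrable
      exact continuous_finset_sum _ (fun m _ => by continuity)
  rw [h2, sum_reindex k (fun j m => ((derivative^[j] P).eval a * (derivative^[m] Q).eval a
    / (Nat.factorial j * Nat.factorial m)) * ((b-a)^(j+m+1)/(j+m+1)))]
  refine Finset.sum_congr rfl fun l hl => ?_
  rw [Finset.mul_sum]
  refine Finset.sum_congr rfl fun m hm => ?_
  simp only [Finset.mem_Icc, le_min_iff] at hm
  have hml : l - m + m = l := by omega
  have hc : ((l - m : ℕ) : ℝ) + (m : ℝ) + 1 = (l : ℝ) + 1 := by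
    rw [← Nat.cast_add, hml]
  rw [hml, hc]
  ring

private lemma iter_der_add (j : ℕ) (P Q : Polynomial ℝ) :
    derivative^[j] (P + Q) = derivative^[j] P + derivative^[j] Q := by
  induction j generalizing P Q with
  | zero => rfl
  | succ j ih => rw [Function.iterate_succ_apply, Function.iterate_succ_apply,
      Function.iterate_succ_apply, Polynomial.derivative_add, ih]

private lemma integral_piece {a b : ℝ} (hab : a ≤ b) {f : ℝ → ℝ} {P : Polynomial ℝ}
    (h : ∀ t ∈ Set.Ioc a b, f t = P.eval t) :
    IntervalIntegrable f MeasureTheory.volume a b ∧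
      (∫ t in a..b, f t) = ∫ t in a..b, P.eval t := by
  have h2 : MeasureTheory.IntegrableOn (fun t => P.eval t) (Set.Ioc a b) :=
    (Polynomial.continuous P).integrableOn_Ioc
  have hio : MeasureTheory.IntegrableOn f (Set.Ioc a b) :=
    h2.congr_fun (fun t ht => (h t ht).symm) measurableSet_Ioc
  constructor
  · exact (intervalIntegrable_iff_integrableOn_Ioc_of_le hab).2 hio
  · rw [intervalIntegral.integral_of_le hab, intervalIntegral.integral_of_le hab]
    exact MeasureTheory.setIntegral_congr_fun measurableSet_Ioc (fun t ht => h t ht)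

/-- The map sending a zero-boundary spline to its matrix of derivative values at the
knots is a linear bijection onto the admissible matrices and an isometry between the
`L²` inner product of splines and the matrix inner product. -/
theorem spline_derivative_matrix_isomorphism_isometry (k n : ℕ) (hkn : k ≤ n)
    (ξ : ℕ → ℝ) (hξ : ∀ i ≤ n, ξ i < ξ (i + 1)) :
    (∀ (S : ℝ → ℝ) (p : ℕ → Polynomial ℝ), IsSplineAux k n ξ p S → ZeroBC k n ξ p →
      derMat k n ξ p ∈ AdmMat k n ξ) ∧
    (∀ (p q : ℕ → Polynomial ℝ) (a b : ℝ),
      derMat k n ξ (fun i => a • p i + b • q i) =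
        fun i j => a * derMat k n ξ p i j + b * derMat k n ξ q i j) ∧
    (∀ u ∈ AdmMat k n ξ, ∃! S : ℝ → ℝ, S ∈ SplineZB k n ξ ∧
      ∃ p : ℕ → Polynomial ℝ, IsSplineAux k n ξ p S ∧ ZeroBC k n ξ p ∧
        derMat k n ξ p = u) ∧
    (∀ (S T : ℝ → ℝ) (p q : ℕ → Polynomial ℝ),
      IsSplineAux k n ξ p S → ZeroBC k n ξ p →
      IsSplineAux k n ξ q T → ZeroBC k n ξ q →
      (∫ t in (ξ 0)..(ξ (n + 1)), S t * T t) =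
        matInner k n ξ (derMat k n ξ p) (derMat k n ξ q)) := by
  have hmono : ∀ j ≤ n + 1, ∀ i ≤ j, ξ i ≤ ξ j := by
    intro j hj
    induction j with
    | zero => intro i hi; rw [Nat.le_zero.mp hi]
    | succ j ih =>
      intro i hi
      rcases Nat.eq_or_lt_of_le hi with h | h
      · rw [h]
      · exact le_trans (ih (by omega) i (by omega)) (hξ j (by omega)).le
  refine ⟨?_, ?_, ?_, ?_⟩
  · -- Part 1: derMat lands in AdmMat
    rintro S p ⟨hdeg, hS0, hSIoc, hmatch⟩ hzb
    refine ⟨fun i j h => by simp only [derMat, if_pos h], ?_, ?_, ?_⟩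
    · simp only [derMat]
      rw [if_neg (by omega), if_neg (by omega), if_neg (lt_irrefl k)]
    · intro i hi r hr
      have e1 : derMat k n ξ p (i+1) r = (derivative^[r] (p i)).eval (ξ (i+1)) := by
        rcases Nat.lt_or_ge i n with h | h
        · simp only [derMat]
          rw [if_neg (by omega), if_pos (by omega), hmatch i h r hr]
        · have hin : i = n := by omega
          subst hin
          simp only [derMat]
          rw [if_neg (by omega), if_neg (by omega), if_pos hr]
      rw [e1, taylor_der (hdeg i hi) hr.le (ξ i) (ξ (i+1))]
      refine Finset.sum_congr rfl fun j hj => ?_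
      simp only [Finset.mem_range] at hj
      have e2 : derMat k n ξ p i (j + r) = (derivative^[j+r] (p i)).eval (ξ i) := by
        simp only [derMat]
        rw [if_neg (by omega), if_pos hi]
      rw [e2]
    · intro j hj
      constructor
      · simp only [derMat]
        rw [if_neg (by omega), if_pos (by omega)]
        exact (hzb j hj).1
      · simp only [derMat]
        rw [if_neg (by omega), if_neg (by omega), if_pos hj]
        exact (hzb j hj).2
  · -- Part 2: linearity
    intro p q a b
    funext i j
    simp only [derMat]
    split_ifs with h1 h2 h3
    · ring
    · rw [iter_der_add, Polynomial.iterate_derivative_smul, Polynomial.iterate_derivative_smul]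
      simp [smul_eq_mul]
    · rw [iter_der_add, Polynomial.iterate_derivative_smul, Polynomial.iterate_derivative_smul]
      simp [smul_eq_mul]
    · ring
  · -- Part 3: existence and uniqueness
    rintro u ⟨hu0, huk, hucomp, hubc⟩
    set p : ℕ → Polynomial ℝ := fun i => recP k (ξ i) (u i) with hpdef
    have hder : ∀ i, ∀ j ≤ k, (derivative^[j] (p i)).eval (ξ i) = u i j :=
      fun i j hj => recP_der k _ _ hj
    have hright : ∀ i ≤ n, ∀ r < k, (derivative^[r] (p i)).eval (ξ (i+1)) = u (i+1) r := by
      intro i hi r hr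
      rw [taylor_der (recP_natDegree k (ξ i) (u i)) hr.le (ξ i) (ξ (i+1)), hucomp i hi r hr]
      refine Finset.sum_congr rfl fun j hj => ?_
      simp only [Finset.mem_range] at hj
      rw [hder i (j+r) (by omega)]
    set S : ℝ → ℝ := fun t =>
      (∑ i ∈ Finset.range (n+1), if t ∈ Set.Ioc (ξ i) (ξ (i+1)) then (p i).eval t else 0)
        + (if t = ξ 0 then (p 0).eval (ξ 0) else 0) with hSdef
    have hdisj : ∀ t : ℝ, ∀ i ≤ n, ∀ j ≤ n, t ∈ Set.Ioc (ξ i) (ξ (i+1)) →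
        t ∈ Set.Ioc (ξ j) (ξ (j+1)) → i = j := by
      intro t i hi j hj h1 h2
      rcases lt_trichotomy i j with h | h | h
      · exact absurd (lt_of_le_of_lt (le_trans h1.2 (hmono j (by omega) (i+1) (by omega))) h2.1)
          (lt_irrefl t)
      · exact h
      · exact absurd (lt_of_le_of_lt (le_trans h2.2 (hmono i (by omega) (j+1) (by omega))) h1.1)
          (lt_irrefl t)
    have hSIoc : ∀ i ≤ n, ∀ t ∈ Set.Ioc (ξ i) (ξ (i+1)), S t = (p i).eval t := by
      intro i hi t ht
      have ht0 : t ≠ ξ 0 := ne_of_gt (lt_of_le_of_lt (hmono i (by omega) 0 (by omega)) ht.1)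
      simp only [hSdef]
      rw [if_neg ht0, add_zero]
      rw [Finset.sum_eq_single i]
      · rw [if_pos ht]
      · intro j hj hji
        have hjn : j ≤ n := Nat.lt_succ_iff.mp (Finset.mem_range.mp hj)
        exact if_neg (fun hmem => hji (hdisj t j hjn i hi hmem ht))
      · intro hni
        exact absurd (Finset.mem_range.mpr (by omega)) hni
    have hS0 : S (ξ 0) = (p 0).eval (ξ 0) := by
      simp only [hSdef]
      rw [if_pos trivial, Finset.sum_eq_zero, zero_add]
      intro i hi
      rw [if_neg]
      intro hmem
      have hin : i ≤ n := Nat.lt_succ_iff.mp (Finset.mem_range.mp hi)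
      exact absurd hmem.1 (not_lt.2 (hmono i (by omega) 0 (by omega)))
    have hSout : ∀ t, t ∉ Set.Icc (ξ 0) (ξ (n+1)) → S t = 0 := by
      intro t ht
      simp only [hSdef]
      rw [Finset.sum_eq_zero, zero_add, if_neg]
      · intro h0
        subst h0
        exact ht ⟨le_refl _, hmono (n+1) le_rfl 0 (by omega)⟩
      · intro i hi
        have hin : i ≤ n := Nat.lt_succ_iff.mp (Finset.mem_range.mp hi)
        rw [if_neg]
        intro hmem
        exact ht ⟨le_trans (hmono i (by omega) 0 (by omega)) hmem.1.le,
          le_trans hmem.2 (hmono (n+1) le_rfl (i+1) (by omega))⟩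
    have hspline : IsSplineAux k n ξ p S := by
      refine ⟨fun i _ => recP_natDegree k (ξ i) (u i), hS0, hSIoc, ?_⟩
      intro i hi j hj
      rw [hright i (by omega) j hj, hder (i+1) j hj.le]
    have hzb : ZeroBC k n ξ p := fun j hj =>
      ⟨(hder 0 j hj.le).trans (hubc j hj).1, (hright n le_rfl j hj).trans (hubc j hj).2⟩
    have hdm : derMat k n ξ p = u := by
      funext i j
      simp only [derMat]
      split_ifs with h1 h2 h3
      · exact (hu0 i j h1).symm
      · exact hder i j (by omega)
      · have hin : i = n + 1 := by omega
        subst hin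
        exact hright n le_rfl j h3
      · have hin : i = n + 1 := by omega
        have hjk : j = k := by omega
        subst hin; subst hjk
        exact huk.symm
    have hcover : ∀ t, ξ 0 < t → t ≤ ξ (n+1) → ∃ i ≤ n, t ∈ Set.Ioc (ξ i) (ξ (i+1)) := by
      intro t h0 h1
      have haux : ∀ m, m ≤ n → t ≤ ξ (m+1) → ∃ i ≤ m, t ∈ Set.Ioc (ξ i) (ξ (i+1)) := by
        intro m
        induction m with
        | zero => intro _ h; exact ⟨0, le_rfl, h0, h⟩
        | succ m ih =>
          intro hm h
          by_cases hc : t ≤ ξ (m+1)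
          · obtain ⟨i, hi, ht⟩ := ih (by omega) hc
            exact ⟨i, by omega, ht⟩
          · exact ⟨m+1, le_rfl, lt_of_not_ge hc, h⟩
      exact haux n le_rfl h1
    refine ⟨S, ⟨⟨hSout, p, hspline, hzb⟩, p, hspline, hzb, hdm⟩, ?_⟩
    rintro T ⟨⟨hTout, -⟩, q, hq, hqzb, hdq⟩
    funext t
    by_cases htI : t ∈ Set.Icc (ξ 0) (ξ (n+1))
    · have hqp : ∀ i ≤ n, q i = p i := by
        intro i hi
        apply poly_eq_recP (hq.1 i hi) (ξ i) (u i)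
        intro j hj
        have hthis := congrFun (congrFun hdq i) j
        simp only [derMat] at hthis
        rw [if_neg (by omega), if_pos hi] at hthis
        exact hthis
      rcases eq_or_lt_of_le htI.1 with h0 | h0
      · rw [← h0, hq.2.1, hS0, hqp 0 (by omega)]
      · obtain ⟨i, hi, hti⟩ := hcover t h0 htI.2
        rw [hq.2.2.1 i hi t hti, hSIoc i hi t hti, hqp i hi]
    · rw [hTout t htI, hSout t htI]
  · -- Part 4: isometry
    intro S T p q hp hpz hq hqz
    have hkey : ∀ i ≤ n, IntervalIntegrable (fun t => S t * T t) MeasureTheory.volume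
        (ξ i) (ξ (i+1)) ∧ (∫ t in (ξ i)..(ξ (i+1)), S t * T t)
          = ∫ t in (ξ i)..(ξ (i+1)), (p i * q i).eval t := by
      intro i hi
      apply integral_piece (hξ i hi).le
      intro t ht
      rw [hp.2.2.1 i hi t ht, hq.2.2.1 i hi t ht, Polynomial.eval_mul]
    rw [← intervalIntegral.sum_integral_adjacent_intervals (a := ξ) (n := n+1)
      (fun i hi => (hkey i (by omega)).1)]
    unfold matInner
    refine Finset.sum_congr rfl fun i hi => ?_
    have hin : i ≤ n := Nat.lt_succ_iff.mp (Finset.mem_range.mp hi)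
    rw [(hkey i hin).2]
    have := poly_integral (k := k) (ξ i) (ξ (i+1)) (p i) (q i) (hp.1 i hin) (hq.1 i hin)
    simp only [Polynomial.eval_mul] at this ⊢
    rw [this]
    refine Finset.sum_congr rfl fun l hl => ?_
    congr 1
    refine Finset.sum_congr rfl fun m hm => ?_
    simp only [Finset.mem_Icc, le_min_iff] at hm
    have e1 : derMat k n ξ p i (l - m) = (derivative^[l-m] (p i)).eval (ξ i) := by
      simp only [derMat]; rw [if_neg (by omega), if_pos hin]
    have e2 : derMat k n ξ q i m = (derivative^[m] (q i)).eval (ξ i) := by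
      simp only [derMat]; rw [if_neg (by omega), if_pos hin]
    rw [e1, e2]
end

section
/- Let U be a (k+2)×(k+1) matrix of derivative values of an order-k spline at k+2 consecutive knots ξ₀ < ... < ξ_{k+1} (right-hand-side convention for the k-th derivative). If the first row u_{0·} and the last row u_{k+1·} are given, then all remaining entries of U are uniquely determined. -/
open Finset

lemma taylor_sum (c d : ℝ) (n : ℕ) :
    ∑ j ∈ range (n+1), c^j / (Nat.factorial j) * (d^(n-j) / (Nat.factorial (n-j)))
      = (c+d)^n / (Nat.factorial n) := by
  rw [add_pow, Finset.sum_div]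
  refine Finset.sum_congr rfl fun j hj => ?_
  have hjn : j ≤ n := Nat.lt_succ_iff.mp (mem_range.mp hj)
  have h := Nat.choose_mul_factorial_mul_factorial hjn
  have h' : ((n.choose j : ℝ)) * (Nat.factorial j) * (Nat.factorial (n-j)) = (Nat.factorial n) := by
    exact_mod_cast congrArg (Nat.cast : ℕ → ℝ) h
  have h1 : (Nat.factorial j : ℝ) ≠ 0 := by positivity
  have h2 : (Nat.factorial (n-j) : ℝ) ≠ 0 := by positivity
  have h3 : (Nat.factorial n : ℝ) ≠ 0 := by positivity
  field_simp
  rw [← h']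
  ring

/-- For the matrix of derivative values of an order-`k` spline at `k+2` consecutive
knots (RHS convention for the `k`-th derivative, satisfying the Taylor compatibility
relations), the first row together with the last row (its `k`-th entry being
disregarded) uniquely determines all the remaining entries. -/
theorem spline_matrix_first_last_row_unique (k : ℕ) (ξ : ℕ → ℝ)
    (hξ : ∀ i ≤ k, ξ i < ξ (i + 1)) (u v : ℕ → ℕ → ℝ)
    (hu : ∀ i, 1 ≤ i → i ≤ k + 1 → ∀ r < k,
      u i r = ∑ j ∈ Finset.range (k - r + 1),
        (ξ i - ξ (i - 1)) ^ j / (Nat.factorial j) * u (i - 1) (j + r))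
    (hv : ∀ i, 1 ≤ i → i ≤ k + 1 → ∀ r < k,
      v i r = ∑ j ∈ Finset.range (k - r + 1),
        (ξ i - ξ (i - 1)) ^ j / (Nat.factorial j) * v (i - 1) (j + r))
    (hfirst : ∀ j ≤ k, u 0 j = v 0 j)
    (hlast : ∀ j < k, u (k + 1) j = v (k + 1) j) :
    ∀ i ≤ k, ∀ j ≤ k, u i j = v i j := by
  set w : ℕ → ℕ → ℝ := fun i j => u i j - v i j with hwdef
  have hw0 : ∀ j ≤ k, w 0 j = 0 := fun j hj => sub_eq_zero.mpr (hfirst j hj)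
  have hwlast : ∀ j < k, w (k+1) j = 0 := fun j hj => sub_eq_zero.mpr (hlast j hj)
  have hwrec : ∀ i, 1 ≤ i → i ≤ k+1 → ∀ r < k,
      w i r = ∑ j ∈ range (k - r + 1),
        (ξ i - ξ (i-1))^j / (Nat.factorial j) * w (i-1) (j+r) := by
    intro i h1 h2 r hr
    simp only [hwdef]
    rw [hu i h1 h2 r hr, hv i h1 h2 r hr, ← Finset.sum_sub_distrib]
    exact sum_congr rfl fun j _ => by ring
  set b : ℕ → ℝ := fun m => w (m+1) k - w m k with hbdef
  have htel : ∀ i, w i k = ∑ m ∈ range i, b m := by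
    intro i
    rw [Finset.sum_range_sub (fun m => w m k), hw0 k le_rfl, sub_zero]
  have hmono : ∀ i j, i < j → j ≤ k+1 → ξ i < ξ j := by
    intro i j hij hj
    have key : ∀ n, i + (n+1) ≤ k + 1 → ξ i < ξ (i + (n+1)) := by
      intro n
      induction n with
      | zero => intro h; exact hξ i (by omega)
      | succ n ih =>
          intro h
          calc ξ i < ξ (i + (n+1)) := ih (by omega)
            _ < ξ (i + (n+1) + 1) := hξ (i + (n+1)) (by omega)
    obtain ⟨n, rfl⟩ : ∃ n, j = i + (n+1) := ⟨j - i - 1, by omega⟩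
    exact key n hj
  have key : ∀ i ≤ k+1, ∀ r < k,
      w i r = ∑ m ∈ range i,
        b m * ((ξ i - ξ (m+1)) ^ (k-r) / (Nat.factorial (k-r))) := by
    intro i
    induction i with
    | zero => intro _ r hr; rw [hw0 r hr.le]; simp
    | succ i ih =>
        intro hik r hr
        have step : w (i+1) r = ∑ j ∈ range (k - r + 1),
            (ξ (i+1) - ξ i)^j / (Nat.factorial j) * w i (j+r) := by
          have := hwrec (i+1) (by omega) (by omega) r hr
          simpa using this
        rw [step, Finset.sum_range_succ]
        have hmid : ∀ j ∈ range (k-r), w i (j+r) = ∑ m ∈ range i,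
            b m * ((ξ i - ξ (m+1)) ^ (k-r-j) / (Nat.factorial (k-r-j))) := by
          intro j hj
          have hjlt : j < k - r := mem_range.mp hj
          rw [ih (by omega) (j+r) (by omega)]
          refine sum_congr rfl fun m _ => ?_
          have : k - (j + r) = k - r - j := by omega
          rw [this]
        rw [Finset.sum_congr rfl (fun j hj => by rw [hmid j hj])]
        have hklast : k - r + r = k := by omega
        rw [hklast, htel i, Finset.sum_range_succ]
        have swap : ∑ j ∈ range (k-r), (ξ (i+1) - ξ i)^j / (Nat.factorial j) *
              (∑ m ∈ range i, b m * ((ξ i - ξ (m+1)) ^ (k-r-j) / (Nat.factorial (k-r-j))))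
            + (ξ (i+1) - ξ i)^(k-r) / (Nat.factorial (k-r)) * (∑ m ∈ range i, b m)
            = ∑ m ∈ range i, b m *
                (∑ j ∈ range (k-r+1), (ξ (i+1) - ξ i)^j / (Nat.factorial j) *
                  ((ξ i - ξ (m+1)) ^ (k-r-j) / (Nat.factorial (k-r-j)))) := by
          simp only [Finset.mul_sum]
          rw [Finset.sum_comm, ← Finset.sum_add_distrib]
          refine Finset.sum_congr rfl fun m hm => ?_
          rw [Finset.sum_range_succ]
          have h0 : k - r - (k - r) = 0 := by omega
          rw [h0]
          simp only [pow_zero, Nat.factorial_zero, Nat.cast_one, div_one]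
          exact congrArg₂ (·+·) (Finset.sum_congr rfl fun j _ => by ring) (by ring)
        rw [swap]
        have hterm : ∀ m ∈ range i,
            b m * (∑ j ∈ range (k-r+1), (ξ (i+1) - ξ i)^j / (Nat.factorial j) *
                  ((ξ i - ξ (m+1)) ^ (k-r-j) / (Nat.factorial (k-r-j))))
            = b m * ((ξ (i+1) - ξ (m+1)) ^ (k-r) / (Nat.factorial (k-r))) := by
          intro m _
          rw [taylor_sum (ξ (i+1) - ξ i) (ξ i - ξ (m+1)) (k-r)]
          congr 3
          ring
        rw [Finset.sum_congr rfl hterm]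
        have hzero : b i * ((ξ (i+1) - ξ (i+1)) ^ (k-r) / (Nat.factorial (k-r))) = 0 := by
          rw [sub_self, zero_pow (by omega), zero_div, mul_zero]
        rw [hzero, add_zero]
  -- the k equations on the jumps
  have heq : ∀ r < k, ∑ m ∈ range k, b m * (ξ (k+1) - ξ (m+1)) ^ (k-r) = 0 := by
    intro r hr
    have h := key (k+1) le_rfl r hr
    rw [hwlast r hr] at h
    rw [Finset.sum_range_succ, sub_self, zero_pow (by omega : k - r ≠ 0), zero_div,
      mul_zero, add_zero] at h
    have hfac : (Nat.factorial (k-r) : ℝ) ≠ 0 := by positivity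
    have h2 : (∑ m ∈ range k, b m * ((ξ (k+1) - ξ (m+1)) ^ (k-r) / (Nat.factorial (k-r))))
        * (Nat.factorial (k-r)) = 0 := by rw [← h]; ring
    rw [Finset.sum_mul] at h2
    rw [← h2]
    exact Finset.sum_congr rfl fun m _ => by field_simp
  -- Vandermonde
  have hbzero : ∀ m < k, b m = 0 := by
    intro m hm
    set x : Fin k → ℝ := fun m => ξ (k+1) - ξ ((m:ℕ)+1) with hxdef
    have hxpos : ∀ m : Fin k, 0 < x m := fun m =>
      sub_pos.mpr (hmono ((m:ℕ)+1) (k+1) (by omega) le_rfl)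
    have hxinj : Function.Injective x := by
      intro a a' h
      by_contra hne
      rcases Ne.lt_or_gt (fun h' : (a:ℕ) = (a':ℕ) => hne (Fin.ext h')) with h1 | h1
      · have := hmono ((a:ℕ)+1) ((a':ℕ)+1) (by omega) (by omega)
        simp only [hxdef] at h; linarith
      · have := hmono ((a':ℕ)+1) ((a:ℕ)+1) (by omega) (by omega)
        simp only [hxdef] at h; linarith
    set A : Matrix (Fin k) (Fin k) ℝ := fun s t => x t ^ ((s:ℕ)+1) with hAdef
    have hdet : A.det ≠ 0 := by
      have hA : A = (Matrix.vandermonde x).transpose * Matrix.diagonal x := by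
        ext s t
        simp [hAdef, Matrix.mul_apply, Matrix.vandermonde, Matrix.diagonal,
          Finset.sum_ite_eq', pow_succ]
      rw [hA, Matrix.det_mul, Matrix.det_transpose, Matrix.det_vandermonde,
        Matrix.det_diagonal]
      refine mul_ne_zero ?_ ?_
      · rw [Finset.prod_ne_zero_iff]
        intro s _
        rw [Finset.prod_ne_zero_iff]
        intro t ht
        have : s ≠ t := by
          rcases Finset.mem_Ioi.mp ht with h
          exact fun he => absurd he.symm (ne_of_gt h)
        exact sub_ne_zero.mpr fun he => this (hxinj he.symm)
      · exact Finset.prod_ne_zero_iff.mpr fun t _ => (hxpos t).ne'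
    have hmv : A.mulVec (fun t => b (t:ℕ)) = 0 := by
      funext s
      have hs : (k : ℕ) - (k - ((s:ℕ)+1)) = (s:ℕ)+1 := by omega
      have := heq (k - ((s:ℕ)+1)) (by omega)
      rw [hs] at this
      simp only [Matrix.mulVec, dotProduct, hAdef, Pi.zero_apply]
      rw [← this, Finset.sum_range fun m => b m * (ξ (k+1) - ξ (m+1)) ^ ((s:ℕ)+1)]
      exact Finset.sum_congr rfl fun t _ => by rw [hxdef]; ring
    have := Matrix.eq_zero_of_mulVec_eq_zero hdet hmv
    exact congrFun this ⟨m, hm⟩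
  -- conclude
  intro i hi j hj
  have hwij : w i j = 0 := by
    rcases Nat.eq_or_lt_of_le hj with hjk | hjk
    · subst hjk
      rw [htel i]
      exact Finset.sum_eq_zero fun m hm => hbzero m (lt_of_lt_of_le (mem_range.mp hm) hi)
    · rcases Nat.eq_zero_or_pos i with rfl | hi1
      · exact hw0 j hj
      · rw [key i (by omega) j hjk]
        exact Finset.sum_eq_zero fun m hm => by
          rw [hbzero m (lt_of_lt_of_le (mem_range.mp hm) hi), zero_mul]
  exact sub_eq_zero.mp hwij
end
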